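/- Every D3-reducible graph has a Hamiltonian cycle. -/

import Mathlib

set_option maxHeartbeats 1000000


/-- A finite graph on a subset of `ℕ`, allowing vertex-set changes under reductions. -/
structure FinGraph where
  verts : Finset ℕ
  Adj : ℕ → ℕ → Prop
  symm : ∀ u v, Adj u v → Adj v u
  loopless : ∀ u, ¬ Adj u u
  support : ∀ u v, Adj u v → u ∈ verts ∧ v ∈ verts

namespace FinGraph

def neighborSet (G : FinGraph) (v : ℕ) : Set ℕ := {u | G.Adj v u}

/-- The degree of a vertex. -/
noncomputable def degree (G : FinGraph) (v : ℕ) : ℕ := (G.neighborSet v).ncard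

/-- Reachability by a walk staying inside the set `S`. -/
def ReachableWithin (G : FinGraph) (S : Set ℕ) (u v : ℕ) : Prop :=
  Relation.ReflTransGen (fun a b => G.Adj a b ∧ a ∈ S ∧ b ∈ S) u v

/-- The subgraph induced on `S` is connected. -/
def ConnectedOn (G : FinGraph) (S : Set ℕ) : Prop :=
  ∀ u ∈ S, ∀ v ∈ S, G.ReachableWithin S u v

def Connected (G : FinGraph) : Prop := G.ConnectedOn ↑G.verts

/-- 3-vertex-connectivity: more than three vertices, and connected after deleting
any two vertices. -/
def ThreeConnected (G : FinGraph) : Prop :=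
  3 < G.verts.card ∧ ∀ x y : ℕ, G.ConnectedOn (↑G.verts \ {x, y})

/-- Graph isomorphism. -/
def Iso (G H : FinGraph) : Prop :=
  ∃ f : ℕ → ℕ, Set.BijOn f ↑G.verts ↑H.verts ∧
    ∀ u ∈ G.verts, ∀ v ∈ G.verts, (G.Adj u v ↔ H.Adj (f u) (f v))

/-- The configuration for a D3a reduction: a triangle `p q r` of degree-three
vertices whose outside neighbors `p' q' r'` are three distinct vertices. -/
def D3aConfig (G : FinGraph) (p q r p' q' r' : ℕ) : Prop :=
  G.degree p = 3 ∧ G.degree q = 3 ∧ G.degree r = 3 ∧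
  G.Adj p q ∧ G.Adj q r ∧ G.Adj p r ∧
  G.Adj p p' ∧ G.Adj q q' ∧ G.Adj r r' ∧
  p' ∉ ({p, q, r} : Set ℕ) ∧ q' ∉ ({p, q, r} : Set ℕ) ∧ r' ∉ ({p, q, r} : Set ℕ) ∧
  p' ≠ q' ∧ p' ≠ r' ∧ q' ≠ r'

/-- A D3a reduction from `G` to `H`: collapse such a triangle to a new vertex `t`. -/
def D3a (G H : FinGraph) : Prop :=
  ∃ p q r p' q' r' t, G.D3aConfig p q r p' q' r' ∧ t ∉ G.verts ∧
    H.verts = (G.verts \ {p, q, r}) ∪ {t} ∧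
    ∀ a b, H.Adj a b ↔
      (G.Adj a b ∧ a ∉ ({p, q, r} : Set ℕ) ∧ b ∉ ({p, q, r} : Set ℕ)) ∨
      (a = t ∧ b ∈ ({p', q', r'} : Set ℕ)) ∨
      (b = t ∧ a ∈ ({p', q', r'} : Set ℕ))

/-- The configuration for a D3b reduction: an induced path `p q r` of degree-three
vertices, all adjacent to a common apex `s`. -/
def D3bConfig (G : FinGraph) (p q r s : ℕ) : Prop :=
  G.degree p = 3 ∧ G.degree q = 3 ∧ G.degree r = 3 ∧
  G.Adj p q ∧ G.Adj q r ∧ ¬ G.Adj p r ∧ p ≠ r ∧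
  G.Adj s p ∧ G.Adj s q ∧ G.Adj s r

/-- A D3b reduction from `G` to `H`: delete the middle vertex `q` and add edge `pr`. -/
def D3b (G H : FinGraph) : Prop :=
  ∃ p q r s, G.D3bConfig p q r s ∧
    H.verts = G.verts \ {q} ∧
    ∀ a b, H.Adj a b ↔
      (G.Adj a b ∧ a ≠ q ∧ b ≠ q) ∨ (a = p ∧ b = r) ∨ (a = r ∧ b = p)

/-- A single D3 reduction. -/
def D3Step (G H : FinGraph) : Prop := G.D3a H ∨ G.D3b H

/-- `G` is a complete graph on four vertices. -/
def IsK4 (G : FinGraph) : Prop :=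
  G.verts.card = 4 ∧ ∀ u ∈ G.verts, ∀ v ∈ G.verts, u ≠ v → G.Adj u v

/-- A graph is D3-reducible if some sequence of D3 reductions takes it to `K₄`. -/
def D3Reducible (G : FinGraph) : Prop :=
  ∃ H, Relation.ReflTransGen D3Step G H ∧ H.IsK4

/-- No D3 reduction applies. -/
def Irreducible (G : FinGraph) : Prop := ¬ ∃ H, G.D3Step H

/-- `H` is a minor of `G`, witnessed by connected, disjoint branch sets. -/
def HasMinor (G H : FinGraph) : Prop :=
  ∃ B : ℕ → Finset ℕ,
    (∀ v ∈ H.verts, (B v).Nonempty ∧ ↑(B v) ⊆ (↑G.verts : Set ℕ) ∧ G.ConnectedOn ↑(B v)) ∧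
    (∀ u ∈ H.verts, ∀ v ∈ H.verts, u ≠ v → Disjoint (B u) (B v)) ∧
    (∀ u v, H.Adj u v → ∃ a ∈ B u, ∃ b ∈ B v, G.Adj a b)

def K5Graph : FinGraph where
  verts := Finset.range 5
  Adj a b := a ≠ b ∧ a < 5 ∧ b < 5
  symm := fun _ _ h => ⟨Ne.symm h.1, h.2.2, h.2.1⟩
  loopless := fun _ h => h.1 rfl
  support := fun _ _ h => ⟨Finset.mem_range.2 h.2.1, Finset.mem_range.2 h.2.2⟩

def K33Graph : FinGraph where
  verts := Finset.range 6
  Adj a b := (a < 3 ∧ 3 ≤ b ∧ b < 6) ∨ (b < 3 ∧ 3 ≤ a ∧ a < 6)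
  symm := fun _ _ h => h.elim Or.inr Or.inl
  loopless := by intro u h; rcases h with ⟨h1, h2, _⟩ | ⟨h1, h2, _⟩ <;> omega
  support := by
    intro u v h
    constructor <;> rw [Finset.mem_range] <;>
      rcases h with ⟨h1, h2, h3⟩ | ⟨h1, h2, h3⟩ <;> omega

/-- Planarity, via Wagner's characterization: no `K₅` and no `K₃,₃` minor. -/
def Planar (G : FinGraph) : Prop := ¬ G.HasMinor K5Graph ∧ ¬ G.HasMinor K33Graph

/-- `T` is a tree: nonempty, connected, and every edge is a bridge (acyclicity). -/
def IsTreeGraph (T : FinGraph) : Prop :=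
  T.verts.Nonempty ∧ T.Connected ∧
  ∀ u v, T.Adj u v → ¬ Relation.ReflTransGen
    (fun a b => T.Adj a b ∧ ¬(a = u ∧ b = v) ∧ ¬(a = v ∧ b = u)) u v

def IsLeaf (T : FinGraph) (v : ℕ) : Prop := T.degree v = 1

/-- The edges of `G` not in the spanning tree `T` (the candidate cycle edges). -/
def cycleAdj (G T : FinGraph) (a b : ℕ) : Prop := G.Adj a b ∧ ¬ T.Adj a b

/-- `G` is a Halin graph with underlying tree `T`: `T` is a spanning tree with at
least four vertices and no degree-two vertex, the non-tree edges form a single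
cycle passing exactly through the leaves of `T`, and `G` is planar (which forces
the cycle to traverse the leaves in the cyclic order of a planar embedding of `T`). -/
def IsHalinVia (G T : FinGraph) : Prop :=
  IsTreeGraph T ∧ T.verts = G.verts ∧ 4 ≤ T.verts.card ∧
  (∀ v ∈ T.verts, T.degree v ≠ 2) ∧
  (∀ a b, T.Adj a b → G.Adj a b) ∧
  (∀ a b, cycleAdj G T a b → T.IsLeaf a ∧ T.IsLeaf b) ∧
  (∀ v ∈ G.verts, T.IsLeaf v → {u | cycleAdj G T v u}.ncard = 2) ∧
  (∀ u v, u ∈ G.verts → v ∈ G.verts → T.IsLeaf u → T.IsLeaf v →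
    Relation.ReflTransGen (cycleAdj G T) u v) ∧
  G.Planar

def IsHalin (G : FinGraph) : Prop := ∃ T, IsHalinVia G T

/-- Treewidth at most `k`, via tree decompositions. -/
def TreewidthLE (G : FinGraph) (k : ℕ) : Prop :=
  ∃ (ι : Type) (T : SimpleGraph ι) (bag : ι → Finset ℕ),
    T.IsTree ∧
    (∀ v ∈ G.verts, ∃ i, v ∈ bag i) ∧
    (∀ u v, G.Adj u v → ∃ i, u ∈ bag i ∧ v ∈ bag i) ∧
    (∀ (v : ℕ) (i j : ι) (p : T.Walk i j), p.IsPath → v ∈ bag i → v ∈ bag j →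
      ∀ m ∈ p.support, v ∈ bag m) ∧
    (∀ i, (bag i).card ≤ k + 1)

/-- A face of a 3-connected planar graph, by Tutte's characterization:
an induced cycle whose complement induces a connected subgraph. -/
def IsFaceCycle (G : FinGraph) (C : Finset ℕ) : Prop :=
  ↑C ⊆ (↑G.verts : Set ℕ) ∧ 3 ≤ C.card ∧
  (∀ v ∈ C, {u | u ∈ C ∧ G.Adj v u}.ncard = 2) ∧
  G.ConnectedOn ↑C ∧
  G.ConnectedOn (↑G.verts \ ↑C)

/-- `D` is the planar dual of the (3-connected planar) graph `G`: its vertices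
correspond bijectively to the faces of `G`, with adjacency for faces sharing an edge. -/
def IsDualOf (D G : FinGraph) : Prop :=
  ∃ F : ℕ → Finset ℕ,
    Set.InjOn F ↑D.verts ∧
    (∀ d ∈ D.verts, IsFaceCycle G (F d)) ∧
    (∀ C, IsFaceCycle G C → ∃ d ∈ D.verts, F d = C) ∧
    (∀ d e, D.Adj d e ↔ d ∈ D.verts ∧ e ∈ D.verts ∧ d ≠ e ∧
      ∃ u v, G.Adj u v ∧ u ∈ F d ∧ v ∈ F d ∧ u ∈ F e ∧ v ∈ F e)

/-- A wheel graph: a hub adjacent to all other vertices, which form a cycle. -/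
def IsWheel (G : FinGraph) : Prop :=
  4 ≤ G.verts.card ∧ ∃ h ∈ G.verts,
    (∀ v ∈ G.verts, v ≠ h → G.Adj h v ∧ G.degree v = 3) ∧
    G.ConnectedOn (↑G.verts \ {h})

/-- Glue the wheel `W` onto `G` along a shared triangular face `{a,b,c}`,
identifying the two faces vertexwise, producing `H`. -/
def GlueStep (G W H : FinGraph) : Prop :=
  ∃ a b c : ℕ, a ≠ b ∧ a ≠ c ∧ b ≠ c ∧
    IsFaceCycle G {a, b, c} ∧ IsFaceCycle W {a, b, c} ∧
    (↑G.verts ∩ ↑W.verts : Set ℕ) = {a, b, c} ∧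
    H.verts = G.verts ∪ W.verts ∧
    (∀ u v, H.Adj u v ↔ G.Adj u v ∨ W.Adj u v)

/-- Graphs constructed by gluing wheels together along triangular faces.
(Each gluing attaches one further wheel along a current triangular face; a glued
face stops being a face, so each face is used at most once, and no graph is
glued to itself.) -/
inductive GluedWheels : FinGraph → Prop
  | base (G : FinGraph) : IsWheel G → GluedWheels G
  | glue (G W H : FinGraph) : GluedWheels G → IsWheel W → GlueStep G W H → GluedWheels H

/-- Delete vertices in `S` from `G`. -/
def removeVerts (G : FinGraph) (S : Finset ℕ) : FinGraph where
  verts := G.verts \ S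
  Adj a b := G.Adj a b ∧ a ∉ S ∧ b ∉ S
  symm := fun u v h => ⟨G.symm u v h.1, h.2.2, h.2.1⟩
  loopless := fun u h => G.loopless u h.1
  support := fun u v h =>
    ⟨Finset.mem_sdiff.2 ⟨(G.support u v h.1).1, h.2.1⟩,
     Finset.mem_sdiff.2 ⟨(G.support u v h.1).2, h.2.2⟩⟩

/-- Delete the edge `uv` from `G`. -/
def deleteEdge (G : FinGraph) (u v : ℕ) : FinGraph where
  verts := G.verts
  Adj a b := G.Adj a b ∧ ¬((a = u ∧ b = v) ∨ (a = v ∧ b = u))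
  symm := fun a b h => ⟨G.symm a b h.1, by tauto⟩
  loopless := fun a h => G.loopless a h.1
  support := fun a b h => G.support a b h.1

end FinGraph

namespace FinGraph

/-- A Hamiltonian cycle represented as a list. -/
def HC (G : FinGraph) (L : List ℕ) : Prop :=
  L.Nodup ∧ L.toFinset = G.verts ∧ L.Chain' G.Adj ∧
  (∀ h : L ≠ [], G.Adj (L.getLast h) (L.head h)) ∧ 3 ≤ L.length

lemma toFinset_perm {l l' : List ℕ} (h : l.Perm l') : l.toFinset = l'.toFinset := by
  ext x; simp [List.Perm.mem_iff h]

lemma hc_rot1 {G : FinGraph} {L : List ℕ} (h : G.HC L) : G.HC (L.rotate 1) := by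
  obtain ⟨hnd, htf, hch, hcl, hlen⟩ := h
  obtain ⟨a, l, rfl⟩ : ∃ a l, L = a :: l := by
    cases L with
    | nil => simp at hlen
    | cons a l => exact ⟨a, l, rfl⟩
  have hlne : l ≠ [] := by
    cases l with
    | nil => simp at hlen
    | cons b l' => simp
  have hrot : (a :: l).rotate 1 = l ++ [a] := by
    rw [List.rotate_cons_succ, List.rotate_zero]
  rw [hrot]
  have hperm : (l ++ [a]).Perm (a :: l) := List.perm_append_singleton a l
  refine ⟨hperm.nodup_iff.2 hnd, (toFinset_perm hperm).trans htf, ?_, ?_, by simpa using hlen⟩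
  · rw [List.Chain', List.isChain_append]
    refine ⟨(List.isChain_cons.1 hch).2, List.isChain_singleton a, ?_⟩
    intro x hx y hy
    simp at hy; subst hy
    rw [List.getLast?_eq_getLast hlne] at hx
    simp at hx; subst hx
    have := hcl (by simp)
    rwa [List.getLast_cons hlne, List.head_cons] at this
  · intro hne
    have h1 : (l ++ [a]).getLast hne = a := List.getLast_append_singleton l
    have h2 : (l ++ [a]).head hne = l.head hlne := List.head_append_of_ne_nil hlne
    rw [h1, h2]
    have : List.Chain G.Adj a l := hch
    cases l with
    | nil => exact absurd rfl hlne
    | cons b l' => exact (List.chain_cons.1 this).1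

lemma hc_rotate {G : FinGraph} {L : List ℕ} (h : G.HC L) (k : ℕ) : G.HC (L.rotate k) := by
  induction k with
  | zero => simpa using h
  | succ n ih => rw [← List.rotate_rotate]; exact hc_rot1 ih

lemma hc_head {G : FinGraph} {L : List ℕ} (h : G.HC L) {v : ℕ} (hv : v ∈ L) :
    ∃ l, G.HC (v :: l) := by
  obtain ⟨n, hn, hgn⟩ := List.mem_iff_getElem.1 hv
  have h' := hc_rotate h n
  have hrot : L.rotate n = L.drop n ++ L.take n := List.rotate_eq_drop_append_take hn.le
  have hdne : L.drop n ≠ [] := by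
    simp [List.drop_eq_nil_iff]; omega
  have hne : L.rotate n ≠ [] := by
    rw [hrot]; simp [hdne]
  have hhead : (L.rotate n).head hne = v := by
    rw [List.head_eq_getElem, List.getElem_rotate]
    have : (0 + n) % L.length = n := by rw [Nat.zero_add, Nat.mod_eq_of_lt hn]
    simp only [this, hgn]
  exact ⟨(L.rotate n).tail, by rw [← hhead, List.cons_head_tail]; exact h'⟩

lemma hc_rev_cons {G : FinGraph} {a : ℕ} {l : List ℕ} (h : G.HC (a :: l)) :
    G.HC (a :: l.reverse) := by
  obtain ⟨hnd, htf, hch, hcl, hlen⟩ := h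
  have hlne : l ≠ [] := by cases l <;> simp_all
  have hrne : l.reverse ≠ [] := by simpa using hlne
  refine ⟨by simpa using hnd, by rw [← htf]; ext x; simp, ?_, ?_, by simpa using hlen⟩
  · rw [List.Chain', List.isChain_cons]
    constructor
    · intro y hy
      rw [List.head?_eq_head hrne, Option.mem_some_iff] at hy
      subst hy
      rw [List.head_reverse]
      exact G.symm _ _ (by have := hcl (by simp); rwa [List.getLast_cons hlne, List.head_cons] at this)
    · rw [List.isChain_reverse]
      refine List.IsChain.imp (fun x y hxy => G.symm _ _ hxy) ?_
      exact (List.isChain_cons.1 hch).2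
  · intro hne
    rw [List.getLast_cons hrne, List.getLast_reverse, List.head_cons]
    have : List.Chain G.Adj a l := hch
    cases l with
    | nil => exact absurd rfl hlne
    | cons b l' => exact G.symm _ _ (List.chain_cons.1 this).1

lemma chain'_mono_mem {R S : ℕ → ℕ → Prop} :
    ∀ (l : List ℕ), l.Chain' R → (∀ a ∈ l, ∀ b ∈ l, R a b → S a b) → l.Chain' S
  | [] => fun _ _ => List.isChain_nil
  | [_] => fun _ _ => List.isChain_singleton _
  | a :: b :: l => fun h hmem => by
      rw [List.Chain', List.isChain_cons_cons] at h ⊢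
      exact ⟨hmem a (by simp) b (by simp) h.1,
        chain'_mono_mem (b :: l) h.2
          (fun x hx y hy => hmem x (List.mem_cons_of_mem _ hx) y (List.mem_cons_of_mem _ hy))⟩

lemma chain_of_chain' {R : ℕ → ℕ → Prop} {c : ℕ} {l : List ℕ} (hne : l ≠ [])
    (h : l.Chain' R) (hc : R c (l.head hne)) : l.Chain R c := by
  cases l with
  | nil => exact absurd rfl hne
  | cons b l' => exact List.chain_cons.2 ⟨hc, h⟩

lemma chain_head {R : ℕ → ℕ → Prop} {c : ℕ} {l : List ℕ} (hne : l ≠ [])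
    (h : l.Chain R c) : R c (l.head hne) := by
  cases l with
  | nil => exact absurd rfl hne
  | cons b l' => exact (List.chain_cons.1 h).1

lemma orp1 (P Q R : Prop) : (Q ∨ R ∨ P) ↔ (P ∨ Q ∨ R) := by tauto
lemma orp2 (P Q R : Prop) : (R ∨ Q ∨ P) ↔ (P ∨ Q ∨ R) := by tauto
lemma orp3 (P Q R : Prop) : (P ∨ R ∨ Q) ↔ (P ∨ Q ∨ R) := by tauto
lemma orp4 (P Q R : Prop) : (R ∨ P ∨ Q) ↔ (P ∨ Q ∨ R) := by tauto
lemma orp5 (P Q R : Prop) : (Q ∨ P ∨ R) ↔ (P ∨ Q ∨ R) := by tauto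
lemma orp0 (P Q R : Prop) : (P ∨ Q ∨ R) ↔ (P ∨ Q ∨ R) := Iff.rfl

lemma head_ne_getLast {l : List ℕ} (hne : l ≠ []) (hnd : l.Nodup) (h2 : 2 ≤ l.length) :
    l.head hne ≠ l.getLast hne := by
  rw [List.head_eq_getElem, List.getLast_eq_getElem]
  intro h
  rw [hnd.getElem_inj_iff] at h
  omega

/-- Base case: K4 has a Hamiltonian cycle. -/
lemma hc_of_isK4 {G : FinGraph} (hK : G.IsK4) : ∃ L, G.HC L := by
  obtain ⟨hcard, hadj⟩ := hK
  have hpos : 0 < G.verts.card := by omega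
  obtain ⟨a, ha⟩ := Finset.card_pos.1 hpos
  have h3 : (G.verts.erase a).card = 3 := by
    rw [Finset.card_erase_of_mem ha, hcard]
  obtain ⟨b, c, d, hbc, hbd, hcd, herase⟩ := Finset.card_eq_three.1 h3
  have hb : b ∈ G.verts := Finset.mem_of_mem_erase (herase ▸ (by simp : b ∈ ({b,c,d} : Finset ℕ)))
  have hc : c ∈ G.verts := Finset.mem_of_mem_erase (herase ▸ (by simp : c ∈ ({b,c,d} : Finset ℕ)))
  have hd : d ∈ G.verts := Finset.mem_of_mem_erase (herase ▸ (by simp : d ∈ ({b,c,d} : Finset ℕ)))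
  have hab : a ≠ b := fun h => by
    have : b ∈ G.verts.erase a := herase ▸ (by simp)
    exact (Finset.mem_erase.1 this).1 h.symm
  have hac : a ≠ c := fun h => by
    have : c ∈ G.verts.erase a := herase ▸ (by simp)
    exact (Finset.mem_erase.1 this).1 h.symm
  have had : a ≠ d := fun h => by
    have : d ∈ G.verts.erase a := herase ▸ (by simp)
    exact (Finset.mem_erase.1 this).1 h.symm
  refine ⟨[a, b, c, d], ?_, ?_, ?_, ?_, by simp⟩
  · simp [hab, hac, had, hbc, hbd, hcd]
  · have : G.verts = insert a (G.verts.erase a) := (Finset.insert_erase ha).symm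
    rw [this, herase]
    ext x; simp
  · exact List.isChain_cons_cons.2 ⟨hadj a ha b hb hab,
      List.isChain_cons_cons.2 ⟨hadj b hb c hc hbc, List.isChain_cons_cons.2 ⟨hadj c hc d hd hcd,
        List.isChain_singleton d⟩⟩⟩
  · intro h
    simpa using hadj d hd a ha had.symm

/-- D3a step preserves Hamiltonicity (backwards). -/
lemma hc_of_d3a {G H : FinGraph} (hGH : G.D3a H) (hH : ∃ L, H.HC L) : ∃ L, G.HC L := by
  obtain ⟨p, q, r, p', q', r', t, hcfg, htG, hV, hAdj⟩ := hGH
  obtain ⟨_, _, _, hpq, hqr, hpr, hpp', hqq', hrr', hp'n, hq'n, hr'n, hp'q', hp'r', hq'r'⟩ := hcfg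
  obtain ⟨L0, hL0⟩ := hH
  have hpG : p ∈ G.verts := (G.support p q hpq).1
  have hqG : q ∈ G.verts := (G.support p q hpq).2
  have hrG : r ∈ G.verts := (G.support q r hqr).2
  have hne_pq : p ≠ q := fun h => G.loopless q (h ▸ hpq)
  have hne_qr : q ≠ r := fun h => G.loopless r (h ▸ hqr)
  have hne_pr : p ≠ r := fun h => G.loopless r (h ▸ hpr)
  have hnotH : ∀ z, z ∈ G.verts → (z = p ∨ z = q ∨ z = r) → z ∉ H.verts := by
    intro z hzG hz hmem
    rw [hV] at hmem
    rcases Finset.mem_union.1 hmem with hm | hm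
    · rcases hz with rfl | rfl | rfl <;> exact (Finset.mem_sdiff.1 hm).2 (by simp)
    · exact htG ((Finset.mem_singleton.1 hm) ▸ hzG)
  have hpH : p ∉ H.verts := hnotH p hpG (Or.inl rfl)
  have hqH : q ∉ H.verts := hnotH q hqG (Or.inr (Or.inl rfl))
  have hrH : r ∉ H.verts := hnotH r hrG (Or.inr (Or.inr rfl))
  have htH : t ∈ H.verts := by rw [hV]; exact Finset.mem_union_right _ (by simp)
  obtain ⟨l, hHC⟩ := hc_head hL0 (by rw [← List.mem_toFinset, hL0.2.1]; exact htH)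
  obtain ⟨hnd, htf, hch, hcl, hlen⟩ := hHC
  have hl2 : 2 ≤ l.length := by simpa using hlen
  have hlne : l ≠ [] := by intro h; rw [h] at hl2; simp at hl2
  have htl : t ∉ l := (List.nodup_cons.1 hnd).1
  have hndl : l.Nodup := (List.nodup_cons.1 hnd).2
  have hsubl : ∀ z ∈ l, z ∈ H.verts := by
    intro z hz
    rw [← htf]; simp [hz]
  obtain ⟨x, hxdef⟩ : ∃ x, l.head hlne = x := ⟨_, rfl⟩
  obtain ⟨y, hydef⟩ : ∃ y, l.getLast hlne = y := ⟨_, rfl⟩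
  have hxy : x ≠ y := hxdef ▸ hydef ▸ head_ne_getLast hlne hndl hl2
  have hchl : List.Chain H.Adj t l := hch
  have hadj_tx : H.Adj t x := hxdef ▸ chain_head hlne hchl
  have hadj_yt : H.Adj y t := by
    have := hcl (by simp)
    rwa [List.getLast_cons hlne, List.head_cons, hydef] at this
  have hx3 : x = p' ∨ x = q' ∨ x = r' := by
    rcases (hAdj t x).1 hadj_tx with ⟨hg, _, _⟩ | ⟨_, hx⟩ | ⟨hx, _⟩
    · exact absurd (G.support t x hg).1 htG
    · simpa using hx
    · exact absurd (hx ▸ hxdef ▸ List.head_mem hlne) htl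
  have hy3 : y = p' ∨ y = q' ∨ y = r' := by
    rcases (hAdj y t).1 hadj_yt with ⟨hg, _, _⟩ | ⟨hy, _⟩ | ⟨_, hy⟩
    · exact absurd (G.support y t hg).2 htG
    · exact absurd (hy ▸ hydef ▸ List.getLast_mem hlne) htl
    · simpa using hy
  have hchlG : l.Chain' G.Adj := by
    refine chain'_mono_mem l ((List.isChain_cons.1 hch).2) ?_
    intro a ha b hb hab
    rcases (hAdj a b).1 hab with ⟨hg, _, _⟩ | ⟨ha', _⟩ | ⟨hb', _⟩
    · exact hg
    · exact absurd (ha' ▸ ha) htl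
    · exact absurd (hb' ▸ hb) htl
  have hvG : ∀ z, z ∈ G.verts ↔ z = p ∨ z = q ∨ z = r ∨ z ∈ l.toFinset := by
    intro z
    constructor
    · intro hz
      by_cases h1 : z = p; · exact Or.inl h1
      by_cases h2 : z = q; · exact Or.inr (Or.inl h2)
      by_cases h3 : z = r; · exact Or.inr (Or.inr (Or.inl h3))
      have hzH : z ∈ H.verts := by
        rw [hV]
        exact Finset.mem_union_left _ (Finset.mem_sdiff.2 ⟨hz, by simp [h1, h2, h3]⟩)
      have hzt : z ≠ t := fun h => htG (h ▸ hz)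
      right; right; right
      have hmem : z ∈ (t :: l).toFinset := htf ▸ hzH
      rw [List.toFinset_cons, Finset.mem_insert] at hmem
      rcases hmem with rfl | hmem
      · exact absurd rfl hzt
      · exact hmem
    · rintro (rfl | rfl | rfl | hz)
      · exact hpG
      · exact hqG
      · exact hrG
      · have : z ∈ H.verts := hsubl z (List.mem_toFinset.1 hz)
        rw [hV] at this
        rcases Finset.mem_union.1 this with hm | hm
        · exact (Finset.mem_sdiff.1 hm).1
        · exact absurd ((Finset.mem_singleton.1 hm) ▸ (List.mem_toFinset.1 hz)) htl
  have key : ∀ a b c : ℕ,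
      (∀ z, (z = a ∨ z = b ∨ z = c) ↔ (z = p ∨ z = q ∨ z = r)) →
      a ≠ b → a ≠ c → b ≠ c → G.Adj a b → G.Adj b c → G.Adj c x → G.Adj y a →
      ∃ L, G.HC L := by
    intro a b c hset hab hac hbc hAab hAbc hAcx hAya
    have haH : a ∉ H.verts := by
      rcases (hset a).1 (Or.inl rfl) with rfl | rfl | rfl <;> assumption
    have hbH : b ∉ H.verts := by
      rcases (hset b).1 (Or.inr (Or.inl rfl)) with rfl | rfl | rfl <;> assumption
    have hcH : c ∉ H.verts := by
      rcases (hset c).1 (Or.inr (Or.inr rfl)) with rfl | rfl | rfl <;> assumption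
    have hal : a ∉ l := fun h => haH (hsubl a h)
    have hbl : b ∉ l := fun h => hbH (hsubl b h)
    have hcl' : c ∉ l := fun h => hcH (hsubl c h)
    refine ⟨a :: b :: c :: l, ?_, ?_, ?_, ?_, ?_⟩
    · simp [List.nodup_cons, hab, hac, hbc, hal, hbl, hcl', hndl]
    · ext z
      rw [List.toFinset_cons, Finset.mem_insert, List.toFinset_cons, Finset.mem_insert,
        List.toFinset_cons, Finset.mem_insert, hvG z]
      constructor
      · rintro (h | h | h | h)
        · rcases (hset z).1 (Or.inl h) with h' | h' | h'
          exacts [Or.inl h', Or.inr (Or.inl h'), Or.inr (Or.inr (Or.inl h'))]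
        · rcases (hset z).1 (Or.inr (Or.inl h)) with h' | h' | h'
          exacts [Or.inl h', Or.inr (Or.inl h'), Or.inr (Or.inr (Or.inl h'))]
        · rcases (hset z).1 (Or.inr (Or.inr h)) with h' | h' | h'
          exacts [Or.inl h', Or.inr (Or.inl h'), Or.inr (Or.inr (Or.inl h'))]
        · exact Or.inr (Or.inr (Or.inr h))
      · rintro (h | h | h | h)
        · rcases (hset z).2 (Or.inl h) with h' | h' | h'
          exacts [Or.inl h', Or.inr (Or.inl h'), Or.inr (Or.inr (Or.inl h'))]
        · rcases (hset z).2 (Or.inr (Or.inl h)) with h' | h' | h'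
          exacts [Or.inl h', Or.inr (Or.inl h'), Or.inr (Or.inr (Or.inl h'))]
        · rcases (hset z).2 (Or.inr (Or.inr h)) with h' | h' | h'
          exacts [Or.inl h', Or.inr (Or.inl h'), Or.inr (Or.inr (Or.inl h'))]
        · exact Or.inr (Or.inr (Or.inr h))
    · exact List.isChain_cons_cons.2 ⟨hAab, List.isChain_cons_cons.2 ⟨hAbc,
        chain_of_chain' hlne hchlG (hxdef ▸ hAcx)⟩⟩
    · intro hne
      have h1 : (a :: b :: c :: l).getLast hne = l.getLast hlne := by
        rw [List.getLast_cons (by simp [hlne]), List.getLast_cons (by simp [hlne]),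
          List.getLast_cons hlne]
      rw [h1, List.head_cons, hydef]
      exact hAya
    · simp only [List.length_cons]; omega
  rcases hx3 with rfl | rfl | rfl <;> rcases hy3 with h | h | h
  · exact absurd h.symm hxy
  · exact key q r p (fun z => orp1 _ _ _) hne_qr hne_pq.symm hne_pr.symm hqr
      (G.symm _ _ hpr) hpp' (by rw [h]; exact G.symm _ _ hqq')
  · exact key r q p (fun z => orp2 _ _ _) hne_qr.symm hne_pr.symm hne_pq.symm
      (G.symm _ _ hqr) (G.symm _ _ hpq) hpp' (by rw [h]; exact G.symm _ _ hrr')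
  · exact key p r q (fun z => orp3 _ _ _) hne_pr hne_pq hne_qr.symm hpr
      (G.symm _ _ hqr) hqq' (by rw [h]; exact G.symm _ _ hpp')
  · exact absurd h.symm hxy
  · exact key r p q (fun z => orp4 _ _ _) hne_pr.symm hne_qr.symm hne_pq
      (G.symm _ _ hpr) hpq hqq' (by rw [h]; exact G.symm _ _ hrr')
  · exact key p q r (fun z => orp0 _ _ _) hne_pq hne_pr hne_qr hpq hqr hrr'
      (by rw [h]; exact G.symm _ _ hpp')
  · exact key q p r (fun z => orp5 _ _ _) hne_pq.symm hne_qr hne_pr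
      (G.symm _ _ hpq) hpr hrr' (by rw [h]; exact G.symm _ _ hqq')
  · exact absurd h.symm hxy

/-- D3b step preserves Hamiltonicity (backwards). -/
lemma hc_of_d3b {G H : FinGraph} (hGH : G.D3b H) (hH : ∃ L, H.HC L) : ∃ L, G.HC L := by
  obtain ⟨p, q, r, s, hcfg, hV, hAdj⟩ := hGH
  obtain ⟨hdp, hdq, hdr, hpq, hqr, hnpr, hpr_ne, hsp, hsq, hsr⟩ := hcfg
  obtain ⟨L0, hL0⟩ := hH
  have hpG : p ∈ G.verts := (G.support p q hpq).1
  have hqG : q ∈ G.verts := (G.support p q hpq).2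
  have hne_pq : p ≠ q := fun h => G.loopless q (h ▸ hpq)
  have hne_sq : s ≠ q := fun h => G.loopless q (h ▸ hsq)
  have hqH : q ∉ H.verts := by rw [hV]; simp
  have hpH : p ∈ H.verts := by
    rw [hV]; exact Finset.mem_sdiff.2 ⟨hpG, by simp [hne_pq]⟩
  have hdp' : (G.neighborSet p).ncard = 3 := hdp
  have hNfin : (G.neighborSet p).Finite := Set.finite_of_ncard_ne_zero (by rw [hdp']; omega)
  have hqN : q ∈ G.neighborSet p := hpq
  have hsN : s ∈ G.neighborSet p := G.symm _ _ hsp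
  have hqs : q ≠ s := hne_sq.symm
  have hsub : ({q, s} : Set ℕ) ⊆ G.neighborSet p := by
    intro z hz
    rcases hz with rfl | rfl
    · exact hqN
    · exact hsN
  have hd1 : ((G.neighborSet p) \ {q, s}).ncard = 1 := by
    rw [Set.ncard_diff hsub, hdp', Set.ncard_pair hqs]
  obtain ⟨x, hx⟩ := Set.ncard_eq_one.1 hd1
  have hNp : ∀ z, G.Adj p z → z = q ∨ z = s ∨ z = x := by
    intro z hz
    by_cases h1 : z = q
    · exact Or.inl h1
    by_cases h2 : z = s
    · exact Or.inr (Or.inl h2)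
    have hmem : z ∈ G.neighborSet p \ {q, s} := ⟨hz, by simp [h1, h2]⟩
    rw [hx] at hmem
    exact Or.inr (Or.inr hmem)
  have hHnb : ∀ z, H.Adj p z → z = s ∨ z = x ∨ z = r := by
    intro z hz
    rcases (hAdj p z).1 hz with ⟨hg, _, hzq⟩ | ⟨_, rfl⟩ | ⟨hpr', _⟩
    · rcases hNp z hg with rfl | rfl | rfl
      · exact absurd rfl hzq
      · exact Or.inl rfl
      · exact Or.inr (Or.inl rfl)
    · exact Or.inr (Or.inr rfl)
    · exact absurd hpr' hpr_ne
  have ins : ∀ (l : List ℕ) (hne : l ≠ []), H.HC (p :: l) → G.Adj q (l.head hne) →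
      l.getLast hne ≠ r → ∃ L, G.HC L := by
    intro l hne hHC hqh hlr
    obtain ⟨hnd, htf, hch, hcl, hlen⟩ := hHC
    have hl2 : 2 ≤ l.length := by
      simp only [List.length_cons] at hlen; omega
    have hpl : p ∉ l := (List.nodup_cons.1 hnd).1
    have hndl : l.Nodup := (List.nodup_cons.1 hnd).2
    have hsubl : ∀ z ∈ l, z ∈ H.verts := by
      intro z hz
      rw [← htf]; simp [hz]
    have hql : q ∉ l := fun h => hqH (hsubl q h)
    have hchlG : l.Chain' G.Adj := by
      refine chain'_mono_mem l ((List.isChain_cons.1 hch).2) ?_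
      intro a ha b hb hab
      rcases (hAdj a b).1 hab with ⟨hg, _, _⟩ | ⟨rfl, _⟩ | ⟨_, rfl⟩
      · exact hg
      · exact absurd ha hpl
      · exact absurd hb hpl
    refine ⟨p :: q :: l, ?_, ?_, ?_, ?_, ?_⟩
    · rw [List.nodup_cons, List.nodup_cons]
      exact ⟨by simp [hne_pq, hpl], hql, hndl⟩
    · ext z
      rw [List.toFinset_cons, Finset.mem_insert, List.toFinset_cons, Finset.mem_insert]
      have hz1 : z ∈ G.verts ↔ z = q ∨ z ∈ H.verts := by
        rw [hV]
        constructor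
        · intro hz
          by_cases h1 : z = q
          · exact Or.inl h1
          · exact Or.inr (Finset.mem_sdiff.2 ⟨hz, by simp [h1]⟩)
        · rintro (rfl | hz)
          · exact hqG
          · exact (Finset.mem_sdiff.1 hz).1
      rw [hz1, ← htf, List.toFinset_cons, Finset.mem_insert]
      exact orp5 _ _ _
    · exact List.isChain_cons_cons.2 ⟨hpq, chain_of_chain' hne hchlG hqh⟩
    · intro hne2
      have h1 : (p :: q :: l).getLast hne2 = l.getLast hne := by
        rw [List.getLast_cons (List.cons_ne_nil q l), List.getLast_cons hne]
      rw [h1, List.head_cons]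
      have hHcl := hcl (by simp)
      rw [List.getLast_cons hne, List.head_cons] at hHcl
      rcases (hAdj _ p).1 hHcl with ⟨hg, _, _⟩ | ⟨_, h'⟩ | ⟨h', _⟩
      · exact hg
      · exact absurd h' hpr_ne
      · exact absurd h' hlr
    · simp only [List.length_cons]; omega
  obtain ⟨l, hHC⟩ := hc_head hL0 (show p ∈ L0 by rw [← List.mem_toFinset, hL0.2.1]; exact hpH)
  have hl2 : 2 ≤ l.length := by
    have := hHC.2.2.2.2; simp only [List.length_cons] at this; omega
  have hlne : l ≠ [] := by intro h; rw [h] at hl2; simp at hl2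
  have hndl : l.Nodup := (List.nodup_cons.1 hHC.1).2
  have hadj_ph : H.Adj p (l.head hlne) :=
    chain_head hlne (hHC.2.2.1 : List.Chain H.Adj p l)
  have hadj_pl : H.Adj p (l.getLast hlne) := by
    have := hHC.2.2.2.1 (by simp)
    rw [List.getLast_cons hlne, List.head_cons] at this
    exact H.symm _ _ this
  have hh3 := hHnb _ hadj_ph
  have hl3 := hHnb _ hadj_pl
  have hhl : l.head hlne ≠ l.getLast hlne := head_ne_getLast hlne hndl hl2
  have hrev : H.HC (p :: l.reverse) := hc_rev_cons hHC
  have hrne : l.reverse ≠ [] := by simpa using hlne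
  have hrh : l.reverse.head hrne = l.getLast hlne := List.head_reverse _
  have hrl : l.reverse.getLast hrne = l.head hlne := List.getLast_reverse _
  have hqs' : G.Adj q s := G.symm _ _ hsq
  by_cases hyr : l.getLast hlne = r
  · exact ins l.reverse hrne hrev (by rw [hrh, hyr]; exact hqr)
      (by rw [hrl]; intro h; exact hhl (h.trans hyr.symm))
  · by_cases hxr : l.head hlne = r
    · exact ins l hlne hHC (by rw [hxr]; exact hqr) hyr
    · rcases hh3 with hhs | hhx | hhr
      · exact ins l hlne hHC (by rw [hhs]; exact hqs') hyr
      · rcases hl3 with hls | hlx | hlr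
        · exact ins l.reverse hrne hrev (by rw [hrh, hls]; exact hqs')
            (by rw [hrl]; exact hxr)
        · exact absurd (hhx.trans hlx.symm) hhl
        · exact absurd hlr hyr
      · exact absurd hhr hxr

lemma hc_of_reducible {G : FinGraph} (h : G.D3Reducible) : ∃ L, G.HC L := by
  obtain ⟨K, hsteps, hK4⟩ := h
  induction hsteps using Relation.ReflTransGen.head_induction_on with
  | refl => exact hc_of_isK4 hK4
  | head h' _ ih =>
    rcases h' with ha | hb
    · exact hc_of_d3a ha ih
    · exact hc_of_d3b hb ih

end FinGraph

theorem d3_reducible_hamiltonian (G : FinGraph) (h : G.D3Reducible) :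
    ∃ (u : ℕ) (l : List ℕ), (u :: l).Nodup ∧ (u :: l).toFinset = G.verts ∧
      List.Chain G.Adj u l ∧ G.Adj ((u :: l).getLast (List.cons_ne_nil u l)) u ∧
      2 ≤ l.length := by
  obtain ⟨L, hL⟩ := FinGraph.hc_of_reducible h
  obtain ⟨hnd, htf, hch, hcl, hlen⟩ := hL
  obtain ⟨u, l, rfl⟩ : ∃ u l, L = u :: l := by
    cases L with
    | nil => simp at hlen
    | cons a l => exact ⟨a, l, rfl⟩
  refine ⟨u, l, hnd, htf, hch, hcl (by simp), ?_⟩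
  simp only [List.length_cons] at hlen; omega
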